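/- Let p, q, r be continuous on [t₁, t₂) with p > 0, and let y be a C¹ solution of the Riccati equation y' + y²/p + (q/p)·y + r = 0 on [t₁, t₂). Then for all t ∈ [t₁, t₂), y(t) = y(t₁)·exp(−∫_{t₁}^t (y(τ)+q(τ))/p(τ) dτ) − ∫_{t₁}^t exp(−∫_τ^t (y(s)+q(s))/p(s) ds)·r(τ) dτ. -/

import Mathlib

/-- Cauchy-formula representation of a solution of the Riccati equation
`y' + y²/p + (q/p)y + r = 0`. -/
theorem stmt_2 (t₁ t₂ : ℝ) (ht : t₁ < t₂) (p q r y y' : ℝ → ℝ)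
    (hp : ContinuousOn p (Set.Ico t₁ t₂))
    (hq : ContinuousOn q (Set.Ico t₁ t₂))
    (hr : ContinuousOn r (Set.Ico t₁ t₂))
    (hppos : ∀ t ∈ Set.Ico t₁ t₂, 0 < p t)
    (hy : ∀ t ∈ Set.Ico t₁ t₂, HasDerivAt y (y' t) t)
    (hy'c : ContinuousOn y' (Set.Ico t₁ t₂))
    (hode : ∀ t ∈ Set.Ico t₁ t₂,
      y' t + (y t) ^ 2 / p t + (q t / p t) * y t + r t = 0) :
    ∀ t ∈ Set.Ico t₁ t₂,
      y t = y t₁ * Real.exp (-∫ τ in t₁..t, (y τ + q τ) / p τ)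
        - ∫ τ in t₁..t, Real.exp (-∫ s in τ..t, (y s + q s) / p s) * r τ := by
  intro t htm
  obtain ⟨ht1, ht2⟩ := htm
  set a : ℝ → ℝ := fun s => (y s + q s) / p s with ha_def
  have hyc : ContinuousOn y (Set.Ico t₁ t₂) := fun x hx =>
    (hy x hx).continuousAt.continuousWithinAt
  have hac : ContinuousOn a (Set.Ico t₁ t₂) :=
    (hyc.add hq).div hp (fun x hx => (hppos x hx).ne')
  have hsub : Set.Icc t₁ t ⊆ Set.Ico t₁ t₂ := fun x hx => ⟨hx.1, lt_of_le_of_lt hx.2 ht2⟩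
  have hsubIoo : Set.Ioo t₁ t ⊆ Set.Ico t₁ t₂ := fun x hx => ⟨hx.1.le, hx.2.trans ht2⟩
  have hopen : IsOpen (Set.Ioo t₁ t₂) := isOpen_Ioo
  have hIooSub : Set.Ioo t₁ t ⊆ Set.Ioo t₁ t₂ := fun x hx => ⟨hx.1, hx.2.trans ht2⟩
  have hacIoo : ContinuousOn a (Set.Ioo t₁ t₂) := hac.mono Set.Ioo_subset_Ico_self
  have ha_int : ∀ u ∈ Set.Icc t₁ t, ∀ v ∈ Set.Icc t₁ t,
      IntervalIntegrable a MeasureTheory.volume u v := by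
    intro u hu v hv
    exact (hac.mono ((Set.uIcc_subset_Icc hu hv).trans hsub)).intervalIntegrable
  set A : ℝ → ℝ := fun x => ∫ s in t₁..x, a s with hA_def
  have hmemIcc : ∀ x ∈ Set.Ioo t₁ t, x ∈ Set.Icc t₁ t := fun x hx => ⟨hx.1.le, hx.2.le⟩
  have ht1mem : t₁ ∈ Set.Icc t₁ t := Set.left_mem_Icc.2 ht1
  have htmem : t ∈ Set.Icc t₁ t := Set.right_mem_Icc.2 ht1
  have hAderiv : ∀ x ∈ Set.Ioo t₁ t, HasDerivAt A (a x) x := by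
    intro x hx
    exact intervalIntegral.integral_hasDerivAt_right
      (ha_int t₁ ht1mem x (hmemIcc x hx))
      (hacIoo.stronglyMeasurableAtFilter hopen x (hIooSub hx))
      (hacIoo.continuousAt (hopen.mem_nhds (hIooSub hx)))
  have hAcont : ContinuousOn A (Set.Icc t₁ t) := by
    have := intervalIntegral.continuousOn_primitive_interval
      (μ := MeasureTheory.volume)
      ((hac.mono hsub).integrableOn_Icc.mono_set
        (le_of_eq (Set.uIcc_of_le ht1)))
    rwa [Set.uIcc_of_le ht1] at this
  -- the integrand of the second term
  set g : ℝ → ℝ := fun τ => Real.exp (A τ) * r τ with hg_def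
  have hgcont : ContinuousOn g (Set.Icc t₁ t) :=
    ((hAcont.rexp)).mul (hr.mono hsub)
  have hg_int : ∀ u ∈ Set.Icc t₁ t, ∀ v ∈ Set.Icc t₁ t,
      IntervalIntegrable g MeasureTheory.volume u v := by
    intro u hu v hv
    exact (hgcont.mono (Set.uIcc_subset_Icc hu hv)).intervalIntegrable
  set F : ℝ → ℝ := fun x => y x * Real.exp (A x) + ∫ τ in t₁..x, g τ with hF_def
  have hFcont : ContinuousOn F (Set.Icc t₁ t) := by
    apply ((hyc.mono hsub).mul hAcont.rexp).add
    have := intervalIntegral.continuousOn_primitive_interval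
      (μ := MeasureTheory.volume)
      (hgcont.integrableOn_Icc.mono_set (le_of_eq (Set.uIcc_of_le ht1)))
    rwa [Set.uIcc_of_le ht1] at this
  have hFderiv : ∀ x ∈ Set.Ioo t₁ t, HasDerivAt F 0 x := by
    intro x hx
    have hxI : x ∈ Set.Ico t₁ t₂ := hsubIoo hx
    have h1 : HasDerivAt (fun x => y x * Real.exp (A x))
        (y' x * Real.exp (A x) + y x * (Real.exp (A x) * a x)) x :=
      (hy x hxI).mul ((hAderiv x hx).exp)
    have hgcIoo : ContinuousOn g (Set.Ioo t₁ t) := hgcont.mono Set.Ioo_subset_Icc_self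
    have hAcontIoo : ContinuousOn A (Set.Ioo t₁ t) := fun z hz =>
      ((hAderiv z hz).differentiableAt.continuousAt).continuousWithinAt
    have hgcIoo2 : ContinuousOn g (Set.Ioo t₁ t) :=
      (hAcontIoo.rexp).mul (hr.mono (hsubIoo))
    have hopen2 : IsOpen (Set.Ioo t₁ t) := isOpen_Ioo
    have h2 : HasDerivAt (fun x => ∫ τ in t₁..x, g τ) (g x) x :=
      intervalIntegral.integral_hasDerivAt_right
        (hg_int t₁ ht1mem x (hmemIcc x hx))
        (hgcIoo2.stronglyMeasurableAtFilter hopen2 x hx)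
        (hgcIoo2.continuousAt (hopen2.mem_nhds hx))
    have := h1.add h2
    refine this.congr_deriv (Eq.symm ?_)
    have hode' := hode x hxI
    have hp0 : p x ≠ 0 := (hppos x hxI).ne'
    simp only [hg_def, ha_def]
    linear_combination (-Real.exp (A x)) * hode'
  have key : F t = F t₁ := by
    have := intervalIntegral.integral_eq_sub_of_hasDeriv_right_of_le ht1 hFcont
      (fun x hx => (hFderiv x hx).hasDerivWithinAt) (f' := fun _ => 0)
      (intervalIntegrable_const)
    exact sub_eq_zero.mp (by simpa using this.symm)
  have hFt1 : F t₁ = y t₁ := by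
    simp [hF_def, intervalIntegral.integral_same, hA_def]
  -- Rewrite goal
  have hAt : (∫ τ in t₁..t, (y τ + q τ) / p τ) = A t := rfl
  have hcongr : (∫ τ in t₁..t, Real.exp (-∫ s in τ..t, (y s + q s) / p s) * r τ)
      = Real.exp (-A t) * ∫ τ in t₁..t, g τ := by
    rw [← intervalIntegral.integral_const_mul]
    apply intervalIntegral.integral_congr
    intro τ hτ
    rw [Set.uIcc_of_le ht1] at hτ
    have hsplit : (∫ s in τ..t, a s) = A t - A τ := by
      rw [hA_def]
      rw [← intervalIntegral.integral_interval_sub_left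
        (ha_int t₁ ht1mem t htmem) (ha_int t₁ ht1mem τ hτ)]
    show Real.exp (-∫ s in τ..t, a s) * r τ = Real.exp (-A t) * (Real.exp (A τ) * r τ)
    rw [hsplit]
    rw [show -(A t - A τ) = -A t + A τ by ring, Real.exp_add]
    ring
  rw [hAt, hcongr]
  have hkey : y t * Real.exp (A t) + ∫ τ in t₁..t, g τ = y t₁ := by
    rw [← hFt1, ← key]
  have hE : Real.exp (A t) ≠ 0 := (Real.exp_pos _).ne'
  rw [Real.exp_neg]
  field_simp
  linarith [hkey]
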